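/- arXiv:1609.07364 — 5 statements merged into one kernel-verified Lean document; each statement's English description precedes it below -/
import Mathlib

section
/- Let 0 < δ < 1 and let w ∈ ℂ satisfy Re(w) ≥ 0. Then sin(π(1-δ)/2) · |w|^δ ≤ Re(w^δ), where w^δ denotes the principal branch power. -/
open Real

/-- For `0 < δ < 1` and `w` in the closed right half-plane, the values of the principal branch
power `w^δ` lie in the angle `sin(π(1-δ)/2)·|w|^δ ≤ Re(w^δ)`. -/
theorem stmt_3 (δ : ℝ) (hδ0 : 0 < δ) (hδ1 : δ < 1) (w : ℂ) (hw : 0 ≤ w.re) :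
    Real.sin (π*(1-δ)/2) * ‖w‖ ^ δ ≤ (w ^ (δ:ℂ)).re := by
  have harg : |Complex.arg w| ≤ π / 2 := Complex.abs_arg_le_pi_div_two_iff.mpr hw
  rw [Complex.cpow_ofReal_re]
  have hsin : Real.sin (π*(1-δ)/2) = Real.cos (π*δ/2) := by
    rw [show π*(1-δ)/2 = π/2 - π*δ/2 by ring, Real.sin_pi_div_two_sub]
  rw [hsin, mul_comm]
  have hnorm : ‖w‖ = ‖w‖ := rfl
  rw [hnorm]
  apply mul_le_mul_of_nonneg_left _ (Real.rpow_nonneg (norm_nonneg w) δ)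
  rw [← Real.cos_abs (Complex.arg w * δ)]
  apply Real.cos_le_cos_of_nonneg_of_le_pi (abs_nonneg _)
  · have := pi_pos
    nlinarith
  · rw [abs_mul, abs_of_pos hδ0]
    have := pi_pos
    nlinarith [abs_nonneg (Complex.arg w)]
end

section
/- For 0 < δ < 1 and ζ in the open unit disk, if s is a Schur class function (holomorphic with |s| ≤ 1 on 𝔻), then Re( ((1 - s(ζ))^{1-δ} - 1) / s(ζ) ) ≤ 0 wherever s(ζ) ≠ 0, using the principal branch of the power. -/
open Real Metric

lemma re_cpow_nonneg_aux {z : ℂ} (hz : 0 < z.re) {r : ℝ} (hr : |r| ≤ 1) :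
    0 ≤ (z ^ (r : ℂ)).re := by
  have hz0 : z ≠ 0 := by
    intro h; rw [h] at hz; simp at hz
  rw [Complex.cpow_def_of_ne_zero hz0, Complex.exp_re]
  have him : (Complex.log z * (r : ℂ)).im = Complex.arg z * r := by
    simp [Complex.log_im]
  rw [him]
  have harg : |Complex.arg z| < π / 2 :=
    Complex.abs_arg_lt_pi_div_two_iff.mpr (Or.inl hz)
  have hcos : 0 ≤ Real.cos (Complex.arg z * r) := by
    apply Real.cos_nonneg_of_mem_Icc
    constructor
    · nlinarith [abs_le.mp hr, abs_lt.mp harg, abs_nonneg r, abs_mul (Complex.arg z) r,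
        le_abs_self (Complex.arg z * r), neg_abs_le (Complex.arg z * r),
        mul_le_mul_of_nonneg_left harg.le (abs_nonneg r)]
    · nlinarith [abs_le.mp hr, abs_lt.mp harg,
        le_abs_self (Complex.arg z * r), abs_mul (Complex.arg z) r,
        mul_le_mul_of_nonneg_left harg.le (abs_nonneg r)]
  positivity

/-- For `0 < δ < 1` and a Schur class function `s` (holomorphic on the unit disk with `|s| ≤ 1`),
wherever `s ζ ≠ 0` one has `Re(((1 - s ζ)^{1-δ} - 1)/ s ζ) ≤ 0` (principal branch power). -/
theorem stmt_5 (δ : ℝ) (hδ0 : 0 < δ) (hδ1 : δ < 1) (s : ℂ → ℂ)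
    (hs : DifferentiableOn ℂ s (ball (0:ℂ) 1))
    (hbd : ∀ z ∈ ball (0:ℂ) 1, ‖s z‖ ≤ 1)
    (ζ : ℂ) (hζ : ζ ∈ ball (0:ℂ) 1) (hne : s ζ ≠ 0) :
    ((((1:ℂ) - s ζ) ^ (((1 - δ : ℝ)):ℂ) - 1) / s ζ).re ≤ 0 := by
  set u := s ζ with hu
  have hu1 : ‖u‖ ≤ 1 := hbd ζ hζ
  set c : ℂ := (((1 - δ : ℝ)) : ℂ) with hc
  have hc0 : c ≠ 0 := by
    simp only [hc, ne_eq, Complex.ofReal_eq_zero]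
    linarith
  by_cases hone : u = 1
  · rw [hone]
    norm_num [Complex.zero_cpow hc0]
  · -- u.re < 1
    have hre1 : u.re < 1 := by
      rcases lt_or_ge u.re 1 with h | h
      · exact h
      · exfalso
        have h2 : u.re ^ 2 + u.im ^ 2 ≤ 1 := by
          have := Complex.sq_norm u
          have habs : ‖u‖ ≤ 1 := hu1
          nlinarith [Complex.sq_norm u, Complex.normSq_apply u,
            norm_nonneg u]
        have : u.re = 1 ∧ u.im = 0 := by constructor <;> nlinarith
        exact hone (Complex.ext this.1 this.2)
    have hposre : ∀ t : ℝ, t ∈ Set.Icc (0:ℝ) 1 → 0 < ((1:ℂ) - (t:ℂ) * u).re := by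
      intro t ht
      have : ((1:ℂ) - (t:ℂ) * u).re = 1 - t * u.re := by simp
      rw [this]
      rcases le_or_gt u.re 0 with h | h
      · nlinarith [ht.1, ht.2]
      · nlinarith [ht.1, ht.2]
    -- derivative
    have hder : ∀ t ∈ Set.uIcc (0:ℝ) 1,
        HasDerivAt (fun t : ℝ => ((1:ℂ) - (t:ℂ) * u) ^ c)
          ((-u) • (c * ((1:ℂ) - (t:ℂ) * u) ^ (c - 1))) t := by
      intro t ht
      rw [Set.uIcc_of_le zero_le_one] at ht
      have hin : HasDerivAt (fun t : ℝ => ((1:ℂ) - (t:ℂ) * u)) (-u) t := by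
        simpa using ((Complex.ofRealCLM.hasDerivAt.mul_const u).const_sub 1)
      have hslit : ((1:ℂ) - (t:ℂ) * u) ∈ Complex.slitPlane :=
        Or.inl (hposre t ht)
      exact (Complex.hasStrictDerivAt_cpow_const hslit).hasDerivAt.scomp t hin
    -- integrability
    have hcont : ContinuousOn (fun t : ℝ => ((1:ℂ) - (t:ℂ) * u) ^ (c - 1))
        (Set.uIcc (0:ℝ) 1) := by
      intro t ht
      rw [Set.uIcc_of_le zero_le_one] at ht
      have hslit : ((1:ℂ) - (t:ℂ) * u) ∈ Complex.slitPlane := Or.inl (hposre t ht)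
      have hc1 : ContinuousAt (fun t : ℝ => ((1:ℂ) - (t:ℂ) * u)) t := by
        fun_prop
      have hcomp : ContinuousAt ((fun z : ℂ => z ^ (c - 1)) ∘ (fun t : ℝ => (1:ℂ) - (t:ℂ) * u)) t :=
        ContinuousAt.comp (f := fun t : ℝ => (1:ℂ) - (t:ℂ) * u)
          (continuousAt_cpow_const hslit) hc1
      exact hcomp.continuousWithinAt
    have hint : IntervalIntegrable (fun t : ℝ => ((1:ℂ) - (t:ℂ) * u) ^ (c - 1))
        MeasureTheory.volume 0 1 := hcont.intervalIntegrable
    have hint2 : IntervalIntegrable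
        (fun t : ℝ => (-u) • (c * ((1:ℂ) - (t:ℂ) * u) ^ (c - 1)))
        MeasureTheory.volume 0 1 := ((hint.const_mul c).smul (-u))
    -- FTC
    have hFTC := intervalIntegral.integral_eq_sub_of_hasDerivAt hder hint2
    simp only [Complex.ofReal_one, Complex.ofReal_zero, zero_mul, one_mul, sub_zero,
      Complex.one_cpow] at hFTC
    -- pull constants out
    have hpull : (∫ t in (0:ℝ)..1, (-u) • (c * ((1:ℂ) - (t:ℂ) * u) ^ (c - 1))) =
        (-u) * (c * ∫ t in (0:ℝ)..1, ((1:ℂ) - (t:ℂ) * u) ^ (c - 1)) := by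
      rw [intervalIntegral.integral_smul, intervalIntegral.integral_const_mul]
      simp [smul_eq_mul]
    rw [hpull] at hFTC
    set I : ℂ := ∫ t in (0:ℝ)..1, ((1:ℂ) - (t:ℂ) * u) ^ (c - 1) with hI
    -- I.re ≥ 0
    have hIre : 0 ≤ I.re := by
      have hre_eq : I.re = ∫ t in (0:ℝ)..1, (((1:ℂ) - (t:ℂ) * u) ^ (c - 1)).re := by
        rw [hI, intervalIntegral.integral_of_le zero_le_one,
          intervalIntegral.integral_of_le zero_le_one]
        have hInt := (intervalIntegrable_iff_integrableOn_Ioc_of_le zero_le_one).mp hint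
        simpa using (integral_re hInt).symm
      rw [hre_eq, intervalIntegral.integral_of_le zero_le_one]
      apply MeasureTheory.setIntegral_nonneg measurableSet_Ioc
      intro t ht
      have ht' : t ∈ Set.Icc (0:ℝ) 1 := ⟨ht.1.le, ht.2⟩
      have hz : 0 < ((1:ℂ) - (t:ℂ) * u).re := hposre t ht'
      have : c - 1 = ((-δ : ℝ) : ℂ) := by rw [hc]; push_cast; ring
      rw [this]
      exact re_cpow_nonneg_aux hz (by rw [abs_neg, abs_of_pos hδ0]; linarith)
    -- conclude
    have hexpr : (((1:ℂ) - u) ^ c - 1) / u = -(c * I) := by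
      rw [← hFTC]
      field_simp
    rw [hexpr]
    have : (-(c * I)).re = -((1 - δ) * I.re) := by
      rw [hc]
      simp [Complex.re_ofReal_mul]
    rw [this]
    have : 0 < 1 - δ := by linarith
    nlinarith
end

section
/- Let A ≥ 0 be a random variable with 𝔼(A²) < ∞, M > 1, and E_j = {A > M^j} for j ≥ 0. Then Σ_{i=0}^∞ M^i · 𝔼(1_{E_{i+8}} · A) ≤ M^{−6} · 𝔼(A²). -/
open MeasureTheory

lemma geom_bound (M : ℝ) (hM : 2 ≤ M) (n : ℕ) :
    ∑ i ∈ Finset.range n, M ^ i ≤ M ^ n := by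
  induction n with
  | zero => simp
  | succ n ih =>
    rw [Finset.sum_range_succ, pow_succ]
    have hMn : (0:ℝ) ≤ M ^ n := pow_nonneg (by linarith) n
    nlinarith

lemma key_bound (M : ℝ) (hM : 2 ≤ M) (a : ℝ) (ha : 0 ≤ a) (s : Finset ℕ) :
    ∑ i ∈ s, (if M ^ (i + 8) < a then M ^ i * a else 0) ≤ (M ^ 6)⁻¹ * a ^ 2 := by
  have hM0 : (0:ℝ) < M := by linarith
  rw [Finset.sum_ite, Finset.sum_const_zero, add_zero]
  set t := s.filter (fun i => M ^ (i + 8) < a) with ht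
  rcases t.eq_empty_or_nonempty with h | h
  · rw [h, Finset.sum_empty]
    positivity
  · set k := t.max' h with hkdef
    have hk : M ^ (k + 8) < a := (Finset.mem_filter.mp (t.max'_mem h)).2
    have hsub : t ⊆ Finset.range (k + 1) := fun i hi =>
      Finset.mem_range.mpr (Nat.lt_succ_of_le (t.le_max' i hi))
    have h1 : ∑ i ∈ t, M ^ i * a ≤ ∑ i ∈ Finset.range (k + 1), M ^ i * a := by
      apply Finset.sum_le_sum_of_subset_of_nonneg hsub
      intro i _ _
      positivity
    have h2 : ∑ i ∈ Finset.range (k + 1), M ^ i * a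
        = (∑ i ∈ Finset.range (k + 1), M ^ i) * a := by
      rw [Finset.sum_mul]
    have h3 : (∑ i ∈ Finset.range (k + 1), M ^ i) * a ≤ M ^ (k + 1) * a :=
      mul_le_mul_of_nonneg_right (geom_bound M hM (k + 1)) ha
    have ha0 : 0 < a := lt_of_le_of_lt (by positivity) hk
    have h4 : M ^ (k + 1) * a ≤ (M ^ 6)⁻¹ * a ^ 2 := by
      rw [inv_mul_eq_div, le_div_iff₀ (by positivity)]
      have : M ^ (k + 1) * a * M ^ 6 = M ^ (k + 7) * a := by ring
      rw [this]
      have ha1 : 1 ≤ a := le_of_lt (lt_of_le_of_lt (one_le_pow₀ (by linarith)) hk)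
      have h5 : M ^ (k + 7) * M < a := by
        calc M ^ (k + 7) * M = M ^ (k + 8) := by ring
          _ < a := hk
      nlinarith [pow_pos hM0 (k + 7)]
    linarith

/-- Lemma 3.2 of the paper (measure-theoretic form): for `A ≥ 0` with `𝔼(A²) < ∞`, `M ≥ 2`,
and `E_j = {A > M^j}`, one has `Σ_{i≥0} M^i 𝔼(1_{E_{i+8}} A) ≤ M^{-6} 𝔼(A²)`. -/
theorem stmt_12 {Ω : Type*} [MeasurableSpace Ω] (μ : Measure Ω) [IsProbabilityMeasure μ]
    (A : Ω → ℝ) (hA : Measurable A) (hA0 : ∀ ω, 0 ≤ A ω)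
    (hint : Integrable (fun ω => (A ω)^2) μ)
    (M : ℝ) (hM : 2 ≤ M) :
    ∑' i : ℕ, M ^ i * ∫ ω in {ω | M ^ (i+8) < A ω}, A ω ∂μ
      ≤ M ^ (-6 : ℤ) * ∫ ω, (A ω)^2 ∂μ := by
  have hM0 : (0:ℝ) < M := by linarith
  have hE : ∀ i : ℕ, MeasurableSet {ω | M ^ (i+8) < A ω} :=
    fun i => measurableSet_lt measurable_const hA
  have hAint : Integrable A μ := by
    refine (hint.add (integrable_const 1)).mono' hA.aestronglyMeasurable ?_
    filter_upwards with ω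
    have := hA0 ω
    simp only [Pi.add_apply]
    rw [Real.norm_eq_abs, abs_of_nonneg this]
    nlinarith [sq_nonneg (A ω - 1)]
  have hzpow : M ^ (-6 : ℤ) = (M ^ 6)⁻¹ := by
    rw [zpow_neg]
    norm_cast
  rw [hzpow]
  have hIpos : 0 ≤ (M ^ 6)⁻¹ * ∫ ω, (A ω)^2 ∂μ := by
    have : 0 ≤ ∫ ω, (A ω)^2 ∂μ := integral_nonneg fun ω => sq_nonneg _
    positivity
  refine tsum_le_of_sum_le' hIpos fun s => ?_
  have hterm : ∀ i : ℕ, M ^ i * ∫ ω in {ω | M ^ (i+8) < A ω}, A ω ∂μ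
      = ∫ ω, Set.indicator {ω | M ^ (i+8) < A ω} (fun ω => M ^ i * A ω) ω ∂μ := by
    intro i
    rw [integral_indicator (hE i), integral_const_mul]
  calc ∑ i ∈ s, M ^ i * ∫ ω in {ω | M ^ (i+8) < A ω}, A ω ∂μ
      = ∑ i ∈ s, ∫ ω, Set.indicator {ω | M ^ (i+8) < A ω} (fun ω => M ^ i * A ω) ω ∂μ :=
        Finset.sum_congr rfl fun i _ => hterm i
    _ = ∫ ω, ∑ i ∈ s, Set.indicator {ω | M ^ (i+8) < A ω} (fun ω => M ^ i * A ω) ω ∂μ := by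
        rw [integral_finset_sum]
        exact fun i _ => (hAint.const_mul (M ^ i)).indicator (hE i)
    _ ≤ ∫ ω, (M ^ 6)⁻¹ * (A ω)^2 ∂μ := by
        apply integral_mono
        · exact integrable_finset_sum s fun i _ =>
            (hAint.const_mul (M ^ i)).indicator (hE i)
        · exact hint.const_mul _
        · intro ω
          simp only [Set.indicator_apply, Set.mem_setOf_eq]
          exact key_bound M hM (A ω) (hA0 ω) s
    _ = (M ^ 6)⁻¹ * ∫ ω, (A ω)^2 ∂μ := integral_const_mul _ _
end

section
/- Let A ≥ 0 be a random variable with 𝔼(A²) = 1 and M ≥ 2. Let E_j = {A > M^j}. Suppose (d_i)_{i≥0} and (w_i)_{i≥0} are random variables satisfying: |d_i| ≤ 2M^{i+1}, d_i supported on E_i, |1 − w_i| ≤ 2, 𝔼|1 − w_i|² ≤ 2M^{−i−8} 𝔼(1_{E_{i+8}} A), and for j ≥ i+8 the cross terms obey |𝔼(d_i(1−w_i) d_j(1−w_j))| ≤ 16 M^{i+1} M^{j+1} ℙ(E_j). Then 𝔼(|Σ_{i=0}^∞ d_i(1 − w_i)|²) ≤ C M^{−6} for an absolute constant C. -/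
open MeasureTheory Finset

/-- geometric sum bound -/
lemma my_geom_le {r B : ℝ} (hr : 2 ≤ r) (hB : 0 ≤ B) (s : Finset ℕ)
    (h : ∀ i ∈ s, r ^ i ≤ B) : ∑ i ∈ s, r ^ i ≤ 2 * B := by
  have hr0 : (0:ℝ) ≤ r := by linarith
  rcases s.eq_empty_or_nonempty with rfl | hne
  · simpa using by linarith
  · set k := s.max' hne with hk
    have hks : k ∈ s := s.max'_mem hne
    have hsub : s ⊆ Finset.range (k+1) := by
      intro i hi
      simp only [Finset.mem_range]
      exact Nat.lt_succ_of_le (s.le_max' i hi)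
    have h1 : ∑ i ∈ s, r ^ i ≤ ∑ i ∈ Finset.range (k+1), r ^ i :=
      Finset.sum_le_sum_of_subset_of_nonneg hsub (fun i _ _ => pow_nonneg hr0 i)
    have h2 : ∀ n : ℕ, ∑ i ∈ Finset.range (n+1), r ^ i ≤ 2 * r ^ n := by
      intro n
      induction n with
      | zero => simp
      | succ n ih =>
        rw [Finset.sum_range_succ]
        have : 2 * r ^ n ≤ r ^ (n+1) := by
          rw [pow_succ]
          calc 2 * r ^ n = r ^ n * 2 := by ring
          _ ≤ r ^ n * r := mul_le_mul_of_nonneg_left hr (pow_nonneg hr0 n)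
        linarith
    calc ∑ i ∈ s, r ^ i ≤ 2 * r ^ k := le_trans h1 (h2 k)
    _ ≤ 2 * B := by linarith [h k hks]

/-- bounded measurable functions are integrable on a finite measure space -/
lemma my_integrable_of_bdd {Ω : Type} [MeasurableSpace Ω] {μ : Measure Ω}
    [IsFiniteMeasure μ] {g : Ω → ℝ} (hg : Measurable g) {c : ℝ}
    (h : ∀ ω, ‖g ω‖ ≤ c) : Integrable g μ :=
  ⟨hg.aestronglyMeasurable, HasFiniteIntegral.of_bounded (ae_of_all _ h)⟩

lemma my_card_near (j : ℕ) (s : Finset ℕ) (h : ∀ i ∈ s, j < i + 8 ∧ i < j + 8) :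
    s.card ≤ 15 := by
  have hsub : s ⊆ Finset.Ico (j-7) (j+8) := by
    intro i hi
    have := h i hi
    simp only [Finset.mem_Ico]
    omega
  calc s.card ≤ (Finset.Ico (j-7) (j+8)).card := Finset.card_le_card hsub
  _ = (j+8) - (j-7) := Nat.card_Ico _ _
  _ ≤ 15 := by omega

/-- The core finite-`N` second moment estimate. -/
lemma my_key_bound {Ω : Type} [MeasurableSpace Ω] (μ : Measure Ω) [IsProbabilityMeasure μ]
    (A : Ω → ℝ) (M : ℝ) (a : ℕ → Ω → ℝ) (hM : 2 ≤ M) (hAmeas : Measurable A)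
    (hA0 : ∀ ω, 0 ≤ A ω)
    (hA2int : Integrable (fun ω => (A ω)^2) μ) (hA2 : (∫ ω, (A ω)^2 ∂μ) = 1)
    (hameas : ∀ i, Measurable (a i)) (ha0 : ∀ i ω, 0 ≤ a i ω)
    (hab : ∀ i ω, a i ω ≤ 4 * M ^ (i+1))
    (hasupp : ∀ i ω, A ω ≤ M ^ i → a i ω = 0)
    (hvar : ∀ i : ℕ, ∫ ω, (a i ω)^2 ∂μ
      ≤ 8 * M ^ (-6:ℤ) * (M ^ i * ∫ ω in {ω | M ^ (i+8) < A ω}, A ω ∂μ))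
    (N : ℕ) :
    ∫ ω, (∑ i ∈ Finset.range N, a i ω)^2 ∂μ ≤ 368 * M ^ (-6:ℤ) := by
  classical
  have hM0 : (0:ℝ) < M := by linarith
  have hMne : M ≠ 0 := hM0.ne'
  have hM1 : (1:ℝ) ≤ M := by linarith
  have hm6 : (0:ℝ) ≤ M ^ (-6:ℤ) := le_of_lt (zpow_pos hM0 _)
  have hSmeas : ∀ c : ℝ, MeasurableSet {ω | c < A ω} :=
    fun c => measurableSet_lt measurable_const hAmeas
  -- notation
  set T : ℕ → ℕ → ℝ := fun i j => ∫ ω, a i ω * a j ω ∂μ with hTdef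
  set Q : ℕ → ℝ := fun i => ∫ ω, (a i ω)^2 ∂μ with hQdef
  set P : ℕ → ℝ := fun j => (μ {ω | M ^ j < A ω}).toReal with hPdef
  set L : ℕ → ℝ := fun i => ∫ ω in {ω | M ^ (i+8) < A ω}, A ω ∂μ with hLdef
  -- basic integrability
  have haa_int : ∀ i j, Integrable (fun ω => a i ω * a j ω) μ := by
    intro i j
    apply my_integrable_of_bdd ((hameas i).mul (hameas j))
      (c := (4 * M ^ (i+1)) * (4 * M ^ (j+1)))
    intro ω
    rw [Real.norm_eq_abs, Pi.mul_apply, abs_of_nonneg (mul_nonneg (ha0 i ω) (ha0 j ω))]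
    exact mul_le_mul (hab i ω) (hab j ω) (ha0 j ω) (by positivity)
  have hsq_int : ∀ i, Integrable (fun ω => (a i ω)^2) μ := by
    intro i
    have := haa_int i i
    simpa [pow_two] using this
  have hT0 : ∀ i j, 0 ≤ T i j :=
    fun i j => integral_nonneg (fun ω => mul_nonneg (ha0 i ω) (ha0 j ω))
  have hQ0 : ∀ i, 0 ≤ Q i := fun i => integral_nonneg (fun ω => sq_nonneg _)
  have hP0 : ∀ j, 0 ≤ P j := fun j => ENNReal.toReal_nonneg
  have hTsymm : ∀ i j, T i j = T j i := by
    intro i j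
    simp only [hTdef]
    congr 1
    ext ω
    ring
  -- near-diagonal bound
  have hTnear : ∀ i j, T i j ≤ (Q i + Q j) / 2 := by
    intro i j
    have hint2 : Integrable (fun ω => ((a i ω)^2 + (a j ω)^2) / 2) μ := by
      simpa using ((hsq_int i).add (hsq_int j)).div_const 2
    have hmono : T i j ≤ ∫ ω, ((a i ω)^2 + (a j ω)^2) / 2 ∂μ := by
      apply integral_mono (haa_int i j) hint2
      intro ω
      show a i ω * a j ω ≤ ((a i ω)^2 + (a j ω)^2) / 2
      nlinarith [sq_nonneg (a i ω - a j ω)]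
    calc T i j ≤ ∫ ω, ((a i ω)^2 + (a j ω)^2) / 2 ∂μ := hmono
    _ = (Q i + Q j) / 2 := by
      rw [integral_div, integral_add (hsq_int i) (hsq_int j)]
  -- far off-diagonal bound
  have hTfar : ∀ i j, T i j ≤ 16 * M ^ (i+1) * M ^ (j+1) * P j := by
    intro i j
    have hmono : T i j ≤ ∫ ω, Set.indicator {ω | M ^ j < A ω}
        (fun _ => (4 * M ^ (i+1)) * (4 * M ^ (j+1))) ω ∂μ := by
      apply integral_mono (haa_int i j)
        ((integrable_const _).indicator (hSmeas (M ^ j)))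
      intro ω
      simp only [Set.indicator_apply, Set.mem_setOf_eq]
      split_ifs with h
      · exact mul_le_mul (hab i ω) (hab j ω) (ha0 j ω) (by positivity)
      · rw [hasupp j ω (not_lt.mp h), mul_zero]
    rw [integral_indicator_const _ (hSmeas (M ^ j))] at hmono
    calc T i j ≤ (μ {ω | M ^ j < A ω}).toReal • ((4 * M ^ (i+1)) * (4 * M ^ (j+1))) := hmono
    _ = 16 * M ^ (i+1) * M ^ (j+1) * P j := by
      simp only [smul_eq_mul, hPdef]
      ring
  -- ∑ M^i L i ≤ 2
  have hL_eq : ∀ i, L i = ∫ ω, Set.indicator {ω | M ^ (i+8) < A ω} A ω ∂μ :=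
    fun i => (integral_indicator (hSmeas (M ^ (i+8)))).symm
  have hAint : Integrable A μ := by
    apply Integrable.mono (hA2int.add (integrable_const 1)) hAmeas.aestronglyMeasurable
    apply ae_of_all
    intro ω
    simp only [Pi.add_apply, Real.norm_eq_abs]
    rw [abs_of_nonneg (hA0 ω), abs_of_nonneg (by positivity : (0:ℝ) ≤ (A ω)^2 + 1)]
    nlinarith [sq_nonneg (A ω - 1)]
  have hind_int : ∀ c : ℝ, Integrable (Set.indicator {ω | c < A ω} A) μ :=
    fun c => hAint.indicator (hSmeas c)
  have hSumL : ∑ i ∈ Finset.range N, M ^ i * L i ≤ 2 := by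
    have step1 : ∑ i ∈ Finset.range N, M ^ i * L i
        = ∫ ω, ∑ i ∈ Finset.range N, M ^ i * Set.indicator {ω | M ^ (i+8) < A ω} A ω ∂μ := by
      rw [integral_finset_sum _ (fun i _ => (hind_int (M ^ (i+8))).const_mul _)]
      exact Finset.sum_congr rfl (fun i _ => by rw [hL_eq i, integral_const_mul _ _])
    rw [step1]
    have ptwise : ∀ ω, ∑ i ∈ Finset.range N, M ^ i * Set.indicator {ω | M ^ (i+8) < A ω} A ω
        ≤ 2 * (A ω)^2 := by
      intro ω
      have hre : ∑ i ∈ Finset.range N, M ^ i * Set.indicator {ω | M ^ (i+8) < A ω} A ω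
          = ∑ i ∈ (Finset.range N).filter (fun i => M ^ (i+8) < A ω), M ^ i * A ω := by
        rw [Finset.sum_filter]
        exact Finset.sum_congr rfl (fun i _ => by
          by_cases h : M ^ (i+8) < A ω <;>
            simp [Set.indicator_apply, Set.mem_setOf_eq, h])
      rw [hre, ← Finset.sum_mul]
      have hgeom : ∑ i ∈ (Finset.range N).filter (fun i => M ^ (i+8) < A ω), M ^ i
          ≤ 2 * A ω := by
        apply my_geom_le hM (hA0 ω)
        intro i hi
        rw [Finset.mem_filter] at hi
        calc M ^ i ≤ M ^ (i+8) := pow_le_pow_right₀ hM1 (by omega)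
        _ ≤ A ω := le_of_lt hi.2
      calc (∑ i ∈ (Finset.range N).filter (fun i => M ^ (i+8) < A ω), M ^ i) * A ω
          ≤ (2 * A ω) * A ω := mul_le_mul_of_nonneg_right hgeom (hA0 ω)
      _ = 2 * (A ω)^2 := by ring
    calc ∫ ω, ∑ i ∈ Finset.range N, M ^ i * Set.indicator {ω | M ^ (i+8) < A ω} A ω ∂μ
        ≤ ∫ ω, 2 * (A ω)^2 ∂μ := by
          apply integral_mono (integrable_finset_sum _
            (fun i _ => (hind_int (M ^ (i+8))).const_mul _)) (hA2int.const_mul 2)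
          exact ptwise
    _ = 2 := by rw [integral_const_mul _ _, hA2]; norm_num
  -- ∑ Q ≤ 16 M^{-6}
  have hSumQ : ∑ i ∈ Finset.range N, Q i ≤ 16 * M ^ (-6:ℤ) := by
    calc ∑ i ∈ Finset.range N, Q i
        ≤ ∑ i ∈ Finset.range N, 8 * M ^ (-6:ℤ) * (M ^ i * L i) :=
          Finset.sum_le_sum (fun i _ => hvar i)
    _ = 8 * M ^ (-6:ℤ) * ∑ i ∈ Finset.range N, M ^ i * L i := by
          rw [Finset.mul_sum]
    _ ≤ 8 * M ^ (-6:ℤ) * 2 := by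
          apply mul_le_mul_of_nonneg_left hSumL (by positivity)
    _ = 16 * M ^ (-6:ℤ) := by ring
  -- ∑ M^{2j} P j ≤ 2
  have hSumP : ∑ j ∈ Finset.range N, M ^ (2*j) * P j ≤ 2 := by
    have step1 : ∑ j ∈ Finset.range N, M ^ (2*j) * P j
        = ∫ ω, ∑ j ∈ Finset.range N,
            Set.indicator {ω | M ^ j < A ω} (fun _ => M ^ (2*j)) ω ∂μ := by
      rw [integral_finset_sum _ (fun j _ => (integrable_const _).indicator (hSmeas (M ^ j)))]
      refine Finset.sum_congr rfl (fun j _ => ?_)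
      rw [integral_indicator_const _ (hSmeas (M ^ j))]
      simp only [smul_eq_mul, hPdef, measureReal_def]
      ring
    rw [step1]
    have ptwise : ∀ ω, ∑ j ∈ Finset.range N,
        Set.indicator {ω | M ^ j < A ω} (fun _ => M ^ (2*j)) ω ≤ 2 * (A ω)^2 := by
      intro ω
      have hre : ∑ j ∈ Finset.range N, Set.indicator {ω | M ^ j < A ω} (fun _ => M ^ (2*j)) ω
          = ∑ j ∈ (Finset.range N).filter (fun j => M ^ j < A ω), (M ^ 2) ^ j := by
        rw [Finset.sum_filter]
        refine Finset.sum_congr rfl (fun j _ => ?_)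
        rw [← pow_mul]
        by_cases h : M ^ j < A ω <;>
          simp [Set.indicator_apply, Set.mem_setOf_eq, h]
      rw [hre]
      apply my_geom_le (by nlinarith) (sq_nonneg (A ω))
      intro j hj
      rw [Finset.mem_filter] at hj
      rw [← pow_mul, mul_comm 2 j, pow_mul]
      exact pow_le_pow_left₀ (pow_nonneg (le_of_lt hM0) j) (le_of_lt hj.2) 2
    calc ∫ ω, ∑ j ∈ Finset.range N,
          Set.indicator {ω | M ^ j < A ω} (fun _ => M ^ (2*j)) ω ∂μ
        ≤ ∫ ω, 2 * (A ω)^2 ∂μ := by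
          apply integral_mono (integrable_finset_sum _
            (fun j _ => (integrable_const _).indicator (hSmeas (M ^ j)))) (hA2int.const_mul 2)
          exact ptwise
    _ = 2 := by rw [integral_const_mul _ _, hA2]; norm_num
  -- the per-column far bound
  have hFarB : ∀ k : ℕ, ∑ x ∈ (Finset.range N).filter (fun x => x + 8 ≤ k), T x k
      ≤ 32 * M ^ (-6:ℤ) * (M ^ (2*k) * P k) := by
    intro k
    have hgeom : ∑ x ∈ (Finset.range N).filter (fun x => x + 8 ≤ k), M ^ x
        ≤ 2 * M ^ ((k:ℤ) - 8) := by
      apply my_geom_le hM (le_of_lt (zpow_pos hM0 _))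
      intro x hx
      rw [Finset.mem_filter] at hx
      calc (M:ℝ) ^ x = M ^ ((x:ℤ)) := (zpow_natCast M x).symm
      _ ≤ M ^ ((k:ℤ) - 8) := zpow_le_zpow_right₀ hM1 (by omega)
    calc ∑ x ∈ (Finset.range N).filter (fun x => x + 8 ≤ k), T x k
        ≤ ∑ x ∈ (Finset.range N).filter (fun x => x + 8 ≤ k),
            M ^ x * (16 * M * M ^ (k+1) * P k) := by
          apply Finset.sum_le_sum
          intro x hx
          calc T x k ≤ 16 * M ^ (x+1) * M ^ (k+1) * P k := hTfar x k
          _ = M ^ x * (16 * M * M ^ (k+1) * P k) := by rw [pow_succ]; ring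
    _ = (∑ x ∈ (Finset.range N).filter (fun x => x + 8 ≤ k), M ^ x)
          * (16 * M * M ^ (k+1) * P k) := by rw [Finset.sum_mul]
    _ ≤ (2 * M ^ ((k:ℤ) - 8)) * (16 * M * M ^ (k+1) * P k) := by
          apply mul_le_mul_of_nonneg_right hgeom
          have : (0:ℝ) ≤ M ^ (k+1) := by positivity
          have := hP0 k
          positivity
    _ = 32 * M ^ (-6:ℤ) * (M ^ (2*k) * P k) := by
          have e1 : (M:ℝ) ^ ((k:ℤ) - 8) * M ^ (k+2) = M ^ (-6:ℤ) * M ^ (2*k) := by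
            rw [← zpow_natCast M (k+2), ← zpow_natCast M (2*k)]
            rw [← zpow_add₀ hMne, ← zpow_add₀ hMne]
            congr 1
            push_cast
            ring
          calc (2 * M ^ ((k:ℤ) - 8)) * (16 * M * M ^ (k+1) * P k)
              = 32 * (M ^ ((k:ℤ) - 8) * M ^ (k+2)) * P k := by ring
          _ = 32 * (M ^ (-6:ℤ) * M ^ (2*k)) * P k := by rw [e1]
          _ = 32 * M ^ (-6:ℤ) * (M ^ (2*k) * P k) := by ring
  -- main expansion
  have expand : ∫ ω, (∑ i ∈ Finset.range N, a i ω)^2 ∂μ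
      = ∑ i ∈ Finset.range N, ∑ j ∈ Finset.range N, T i j := by
    have e1 : ∀ ω, (∑ i ∈ Finset.range N, a i ω)^2
        = ∑ i ∈ Finset.range N, ∑ j ∈ Finset.range N, a i ω * a j ω := by
      intro ω
      rw [pow_two, Finset.sum_mul_sum]
    simp only [e1]
    rw [integral_finset_sum _ (fun i _ => integrable_finset_sum _ (fun j _ => haa_int i j))]
    exact Finset.sum_congr rfl (fun i _ => integral_finset_sum _ (fun j _ => haa_int i j))
  rw [expand]
  -- split the double sum
  have split : ∀ i : ℕ, ∑ j ∈ Finset.range N, T i j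
      = (∑ j ∈ (Finset.range N).filter (fun j => i + 8 ≤ j), T i j)
        + ((∑ j ∈ (Finset.range N).filter (fun j => ¬(i + 8 ≤ j) ∧ j + 8 ≤ i), T i j)
          + ∑ j ∈ (Finset.range N).filter (fun j => ¬(i + 8 ≤ j) ∧ ¬(j + 8 ≤ i)), T i j) := by
    intro i
    rw [← Finset.sum_filter_add_sum_filter_not (Finset.range N) (fun j => i + 8 ≤ j)]
    congr 1
    rw [← Finset.sum_filter_add_sum_filter_not
      ((Finset.range N).filter (fun j => ¬(i + 8 ≤ j))) (fun j => j + 8 ≤ i)]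
    rw [Finset.filter_filter, Finset.filter_filter]
  simp only [split]
  rw [Finset.sum_add_distrib, Finset.sum_add_distrib]
  -- three pieces
  have far1 : ∑ i ∈ Finset.range N,
      ∑ j ∈ (Finset.range N).filter (fun j => i + 8 ≤ j), T i j ≤ 64 * M ^ (-6:ℤ) := by
    have hswap1 : ∑ i ∈ Finset.range N, ∑ j ∈ (Finset.range N).filter (fun j => i + 8 ≤ j), T i j
        = ∑ j ∈ Finset.range N, ∑ i ∈ (Finset.range N).filter (fun i => i + 8 ≤ j), T i j := by
      simp only [Finset.sum_filter]
      exact Finset.sum_comm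
    rw [hswap1]
    calc ∑ j ∈ Finset.range N, ∑ i ∈ (Finset.range N).filter (fun i => i + 8 ≤ j), T i j
        ≤ ∑ j ∈ Finset.range N, 32 * M ^ (-6:ℤ) * (M ^ (2*j) * P j) :=
          Finset.sum_le_sum (fun j _ => hFarB j)
    _ = 32 * M ^ (-6:ℤ) * ∑ j ∈ Finset.range N, M ^ (2*j) * P j := by rw [Finset.mul_sum]
    _ ≤ 32 * M ^ (-6:ℤ) * 2 := mul_le_mul_of_nonneg_left hSumP (by positivity)
    _ = 64 * M ^ (-6:ℤ) := by ring
  have far2 : ∑ i ∈ Finset.range N,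
      ∑ j ∈ (Finset.range N).filter (fun j => ¬(i + 8 ≤ j) ∧ j + 8 ≤ i), T i j
      ≤ 64 * M ^ (-6:ℤ) := by
    have hle : ∀ i ∈ Finset.range N,
        ∑ j ∈ (Finset.range N).filter (fun j => ¬(i + 8 ≤ j) ∧ j + 8 ≤ i), T i j
        ≤ 32 * M ^ (-6:ℤ) * (M ^ (2*i) * P i) := by
      intro i _
      calc ∑ j ∈ (Finset.range N).filter (fun j => ¬(i + 8 ≤ j) ∧ j + 8 ≤ i), T i j
          ≤ ∑ j ∈ (Finset.range N).filter (fun j => j + 8 ≤ i), T i j := by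
            apply Finset.sum_le_sum_of_subset_of_nonneg
            · intro j hj
              rw [Finset.mem_filter] at hj ⊢
              exact ⟨hj.1, hj.2.2⟩
            · intro j _ _
              exact hT0 i j
      _ = ∑ j ∈ (Finset.range N).filter (fun j => j + 8 ≤ i), T j i :=
            Finset.sum_congr rfl (fun j _ => hTsymm i j)
      _ ≤ 32 * M ^ (-6:ℤ) * (M ^ (2*i) * P i) := hFarB i
    calc ∑ i ∈ Finset.range N,
        ∑ j ∈ (Finset.range N).filter (fun j => ¬(i + 8 ≤ j) ∧ j + 8 ≤ i), T i j
        ≤ ∑ i ∈ Finset.range N, 32 * M ^ (-6:ℤ) * (M ^ (2*i) * P i) :=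
          Finset.sum_le_sum hle
    _ = 32 * M ^ (-6:ℤ) * ∑ i ∈ Finset.range N, M ^ (2*i) * P i := by rw [Finset.mul_sum]
    _ ≤ 32 * M ^ (-6:ℤ) * 2 := mul_le_mul_of_nonneg_left hSumP (by positivity)
    _ = 64 * M ^ (-6:ℤ) := by ring
  have near : ∑ i ∈ Finset.range N,
      ∑ j ∈ (Finset.range N).filter (fun j => ¬(i + 8 ≤ j) ∧ ¬(j + 8 ≤ i)), T i j
      ≤ 240 * M ^ (-6:ℤ) := by
    have hcard : ∀ i : ℕ,
        ((Finset.range N).filter (fun j => ¬(i + 8 ≤ j) ∧ ¬(j + 8 ≤ i))).card ≤ 15 := by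
      intro i
      apply my_card_near i
      intro j hj
      rw [Finset.mem_filter] at hj
      omega
    have step1 : ∑ i ∈ Finset.range N,
        ∑ j ∈ (Finset.range N).filter (fun j => ¬(i + 8 ≤ j) ∧ ¬(j + 8 ≤ i)), T i j
        ≤ ∑ i ∈ Finset.range N,
          ∑ j ∈ (Finset.range N).filter (fun j => ¬(i + 8 ≤ j) ∧ ¬(j + 8 ≤ i)),
            (Q i + Q j) / 2 := by
      apply Finset.sum_le_sum
      intro i _
      exact Finset.sum_le_sum (fun j _ => hTnear i j)
    have key2 : ∀ i j : ℕ, (Q i + Q j) / 2 = Q i / 2 + Q j / 2 := fun i j => by ring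
    have hpart1 : ∑ i ∈ Finset.range N,
        ∑ j ∈ (Finset.range N).filter (fun j => ¬(i + 8 ≤ j) ∧ ¬(j + 8 ≤ i)), Q i / 2
        ≤ (15 / 2) * ∑ i ∈ Finset.range N, Q i := by
      rw [Finset.mul_sum]
      apply Finset.sum_le_sum
      intro i _
      rw [Finset.sum_const, nsmul_eq_mul]
      calc (((Finset.range N).filter (fun j => ¬(i + 8 ≤ j) ∧ ¬(j + 8 ≤ i))).card : ℝ)
            * (Q i / 2) ≤ 15 * (Q i / 2) := by
            apply mul_le_mul_of_nonneg_right _ (by positivity)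
            exact_mod_cast hcard i
      _ = 15 / 2 * Q i := by ring
    have hpart2 : ∑ i ∈ Finset.range N,
        ∑ j ∈ (Finset.range N).filter (fun j => ¬(i + 8 ≤ j) ∧ ¬(j + 8 ≤ i)), Q j / 2
        ≤ (15 / 2) * ∑ j ∈ Finset.range N, Q j := by
      have hswap2 : ∑ i ∈ Finset.range N,
          ∑ j ∈ (Finset.range N).filter (fun j => ¬(i + 8 ≤ j) ∧ ¬(j + 8 ≤ i)), Q j / 2
          = ∑ j ∈ Finset.range N,
            ∑ i ∈ (Finset.range N).filter (fun i => ¬(i + 8 ≤ j) ∧ ¬(j + 8 ≤ i)), Q j / 2 := by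
        simp only [Finset.sum_filter]
        exact Finset.sum_comm
      rw [hswap2, Finset.mul_sum]
      apply Finset.sum_le_sum
      intro j _
      rw [Finset.sum_const, nsmul_eq_mul]
      have hc : ((Finset.range N).filter (fun i => ¬(i + 8 ≤ j) ∧ ¬(j + 8 ≤ i))).card ≤ 15 := by
        apply my_card_near j
        intro i hi
        rw [Finset.mem_filter] at hi
        omega
      calc (((Finset.range N).filter (fun i => ¬(i + 8 ≤ j) ∧ ¬(j + 8 ≤ i))).card : ℝ)
            * (Q j / 2) ≤ 15 * (Q j / 2) := by
            apply mul_le_mul_of_nonneg_right _ (by positivity)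
            exact_mod_cast hc
      _ = 15 / 2 * Q j := by ring
    calc ∑ i ∈ Finset.range N,
        ∑ j ∈ (Finset.range N).filter (fun j => ¬(i + 8 ≤ j) ∧ ¬(j + 8 ≤ i)), T i j
        ≤ ∑ i ∈ Finset.range N,
          ∑ j ∈ (Finset.range N).filter (fun j => ¬(i + 8 ≤ j) ∧ ¬(j + 8 ≤ i)),
            (Q i + Q j) / 2 := step1
    _ = (∑ i ∈ Finset.range N,
          ∑ j ∈ (Finset.range N).filter (fun j => ¬(i + 8 ≤ j) ∧ ¬(j + 8 ≤ i)), Q i / 2)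
        + ∑ i ∈ Finset.range N,
          ∑ j ∈ (Finset.range N).filter (fun j => ¬(i + 8 ≤ j) ∧ ¬(j + 8 ≤ i)), Q j / 2 := by
        simp only [key2, Finset.sum_add_distrib]
    _ ≤ (15 / 2) * (∑ i ∈ Finset.range N, Q i) + (15 / 2) * ∑ i ∈ Finset.range N, Q i := by
        exact add_le_add hpart1 hpart2
    _ = 15 * ∑ i ∈ Finset.range N, Q i := by ring
    _ ≤ 15 * (16 * M ^ (-6:ℤ)) := by
        apply mul_le_mul_of_nonneg_left hSumQ (by norm_num)
    _ = 240 * M ^ (-6:ℤ) := by ring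
  linarith [far1, far2, near]

/-- Lemma 3.3 of the paper (abstract form): with `𝔼(A²) = 1`, `M ≥ 2`, `E_j = {A > M^j}`,
`|d_i| ≤ 2M^{i+1}`, `d_i` supported on `E_i`, `|1-w_i| ≤ 2`,
`𝔼|1-w_i|² ≤ 2M^{-i-8} 𝔼(1_{E_{i+8}} A)`, and the far cross terms bounded by
`16 M^{i+1} M^{j+1} ℙ(E_j)` for `j ≥ i+8`, one has
`𝔼|Σ_i d_i (1-w_i)|² ≤ C M^{-6}` for an absolute constant `C`. -/
theorem stmt_14 : ∃ C : ℝ, 0 < C ∧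
    ∀ {Ω : Type} [MeasurableSpace Ω] (μ : Measure Ω) [IsProbabilityMeasure μ]
      (A : Ω → ℝ) (M : ℝ) (d w : ℕ → Ω → ℂ),
      2 ≤ M → Measurable A → (∀ ω, 0 ≤ A ω) →
      Integrable (fun ω => (A ω)^2) μ → (∫ ω, (A ω)^2 ∂μ) = 1 →
      (∀ i, Measurable (d i)) → (∀ i, Measurable (w i)) →
      (∀ i ω, ‖d i ω‖ ≤ 2 * M ^ (i+1)) →
      (∀ i ω, A ω ≤ M ^ i → d i ω = 0) →
      (∀ i ω, ‖1 - w i ω‖ ≤ 2) →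
      (∀ i : ℕ, ∫ ω, ‖1 - w i ω‖^2 ∂μ
          ≤ 2 * M ^ (-(i:ℤ) - 8) * ∫ ω in {ω | M ^ (i+8) < A ω}, A ω ∂μ) →
      (∀ i j : ℕ, i + 8 ≤ j →
        ‖∫ ω, d i ω * (1 - w i ω) * (d j ω * (1 - w j ω)) ∂μ‖
          ≤ 16 * M ^ (i+1) * M ^ (j+1) * (μ {ω | M ^ j < A ω}).toReal) →
      ∫ ω, ‖∑' i : ℕ, d i ω * (1 - w i ω)‖^2 ∂μ ≤ C * M ^ (-6 : ℤ) := by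
  classical
  refine ⟨368, by norm_num, ?_⟩
  intro Ω _inst μ _inst2 A M d w hM hAmeas hA0 hA2int hA2 hdmeas hwmeas hdb hdsupp hwb
    hwvar _hcross
  have hM0 : (0:ℝ) < M := by linarith
  have hMne : M ≠ 0 := hM0.ne'
  have hM1 : (1:ℝ) ≤ M := by linarith
  have hSmeas : ∀ c : ℝ, MeasurableSet {ω | c < A ω} :=
    fun c => measurableSet_lt measurable_const hAmeas
  set a : ℕ → Ω → ℝ := fun i ω => ‖d i ω * (1 - w i ω)‖ with hadef
  have hameas : ∀ i, Measurable (a i) :=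
    fun i => ((hdmeas i).mul (measurable_const.sub (hwmeas i))).norm
  have ha0 : ∀ i ω, 0 ≤ a i ω := fun i ω => norm_nonneg _
  have hab : ∀ i ω, a i ω ≤ 4 * M ^ (i+1) := by
    intro i ω
    calc a i ω = ‖d i ω‖ * ‖1 - w i ω‖ := norm_mul _ _
    _ ≤ (2 * M ^ (i+1)) * 2 :=
      mul_le_mul (hdb i ω) (hwb i ω) (norm_nonneg _) (by positivity)
    _ = 4 * M ^ (i+1) := by ring
  have hasupp : ∀ i ω, A ω ≤ M ^ i → a i ω = 0 := by
    intro i ω h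
    simp [hadef, hdsupp i ω h]
  have hXmeas : ∀ i, Measurable (fun ω => d i ω * (1 - w i ω)) :=
    fun i => (hdmeas i).mul (measurable_const.sub (hwmeas i))
  -- variance bound in derived form
  have hvar : ∀ i : ℕ, ∫ ω, (a i ω)^2 ∂μ
      ≤ 8 * M ^ (-6:ℤ) * (M ^ i * ∫ ω in {ω | M ^ (i+8) < A ω}, A ω ∂μ) := by
    intro i
    have ha2int : Integrable (fun ω => (a i ω)^2) μ := by
      apply my_integrable_of_bdd ((hameas i).pow_const 2) (c := (4 * M ^ (i+1))^2)
      intro ω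
      rw [Real.norm_eq_abs, abs_of_nonneg (sq_nonneg _)]
      exact pow_le_pow_left₀ (ha0 i ω) (hab i ω) 2
    have hw2int : Integrable (fun ω => ‖1 - w i ω‖^2) μ := by
      apply my_integrable_of_bdd ((measurable_const.sub (hwmeas i)).norm.pow_const 2) (c := 4)
      intro ω
      rw [Real.norm_eq_abs, abs_of_nonneg (sq_nonneg _)]
      show ‖1 - w i ω‖ ^ 2 ≤ 4
      nlinarith [hwb i ω, norm_nonneg (1 - w i ω)]
    have h1 : ∫ ω, (a i ω)^2 ∂μ
        ≤ ∫ ω, (2 * M ^ (i+1))^2 * ‖1 - w i ω‖^2 ∂μ := by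
      apply integral_mono ha2int (hw2int.const_mul _)
      intro ω
      show (a i ω)^2 ≤ (2 * M ^ (i+1))^2 * ‖1 - w i ω‖^2
      rw [hadef]
      simp only [norm_mul]
      rw [mul_pow]
      apply mul_le_mul_of_nonneg_right _ (sq_nonneg _)
      exact pow_le_pow_left₀ (norm_nonneg _) (hdb i ω) 2
    rw [integral_const_mul] at h1
    have hL0 : 0 ≤ ∫ ω in {ω | M ^ (i+8) < A ω}, A ω ∂μ :=
      setIntegral_nonneg (hSmeas _) (fun ω _ => hA0 ω)
    have e : ((2:ℝ) * M ^ (i+1))^2 * (2 * M ^ (-(i:ℤ) - 8)) = 8 * M ^ (-6:ℤ) * M ^ i := by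
      have e0 : ((2:ℝ) * M ^ (i+1))^2 * (2 * M ^ (-(i:ℤ) - 8))
          = 8 * (M ^ (2*i+2) * M ^ (-(i:ℤ) - 8)) := by ring
      rw [e0, ← zpow_natCast M (2*i+2), ← zpow_add₀ hMne]
      rw [← zpow_natCast M i]
      rw [show ((2*i+2 : ℕ) : ℤ) + (-(i:ℤ) - 8) = (-6:ℤ) + (i:ℤ) by push_cast; ring]
      rw [zpow_add₀ hMne]
      ring
    calc ∫ ω, (a i ω)^2 ∂μ
        ≤ (2 * M ^ (i+1))^2 * ∫ ω, ‖1 - w i ω‖^2 ∂μ := h1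
    _ ≤ (2 * M ^ (i+1))^2
          * (2 * M ^ (-(i:ℤ) - 8) * ∫ ω in {ω | M ^ (i+8) < A ω}, A ω ∂μ) :=
        mul_le_mul_of_nonneg_left (hwvar i) (by positivity)
    _ = 8 * M ^ (-6:ℤ) * (M ^ i * ∫ ω in {ω | M ^ (i+8) < A ω}, A ω ∂μ) := by
        rw [← mul_assoc, e]
        ring
  -- the finite-sum bound
  have key : ∀ N : ℕ, ∫ ω, ‖∑ i ∈ Finset.range N, d i ω * (1 - w i ω)‖^2 ∂μ
      ≤ 368 * M ^ (-6:ℤ) := by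
    intro N
    have hsum_meas : Measurable (fun ω => ∑ i ∈ Finset.range N, d i ω * (1 - w i ω)) :=
      Finset.measurable_sum _ (fun i _ => hXmeas i)
    have hint1 : Integrable (fun ω => ‖∑ i ∈ Finset.range N, d i ω * (1 - w i ω)‖^2) μ := by
      apply my_integrable_of_bdd (hsum_meas.norm.pow_const 2)
        (c := (∑ i ∈ Finset.range N, 4 * M ^ (i+1))^2)
      intro ω
      rw [Real.norm_eq_abs, abs_of_nonneg (sq_nonneg _)]
      apply pow_le_pow_left₀ (norm_nonneg _) _ 2
      calc ‖∑ i ∈ Finset.range N, d i ω * (1 - w i ω)‖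
          ≤ ∑ i ∈ Finset.range N, a i ω := norm_sum_le _ _
      _ ≤ ∑ i ∈ Finset.range N, 4 * M ^ (i+1) :=
          Finset.sum_le_sum (fun i _ => hab i ω)
    have hint2 : Integrable (fun ω => (∑ i ∈ Finset.range N, a i ω)^2) μ := by
      apply my_integrable_of_bdd ((Finset.measurable_sum _ (fun i _ => hameas i)).pow_const 2)
        (c := (∑ i ∈ Finset.range N, 4 * M ^ (i+1))^2)
      intro ω
      rw [Real.norm_eq_abs, abs_of_nonneg (sq_nonneg _)]
      apply pow_le_pow_left₀ (Finset.sum_nonneg (fun i _ => ha0 i ω)) _ 2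
      exact Finset.sum_le_sum (fun i _ => hab i ω)
    have h1 : ∫ ω, ‖∑ i ∈ Finset.range N, d i ω * (1 - w i ω)‖^2 ∂μ
        ≤ ∫ ω, (∑ i ∈ Finset.range N, a i ω)^2 ∂μ := by
      apply integral_mono hint1 hint2
      intro ω
      show ‖∑ i ∈ Finset.range N, d i ω * (1 - w i ω)‖^2 ≤ (∑ i ∈ Finset.range N, a i ω)^2
      exact pow_le_pow_left₀ (norm_nonneg _) (norm_sum_le _ _) 2
    exact h1.trans
      (my_key_bound μ A M a hM hAmeas hA0 hA2int hA2 hameas ha0 hab hasupp hvar N)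
  -- dominated convergence
  have hbound_int : Integrable (fun ω => 64 * M^2 * (A ω)^2) μ := hA2int.const_mul _
  have hFmeas : ∀ n : ℕ, AEStronglyMeasurable
      (fun ω => ‖∑ i ∈ Finset.range n, d i ω * (1 - w i ω)‖^2) μ :=
    fun n => ((Finset.measurable_sum _ (fun i _ => hXmeas i)).norm.pow_const 2).aestronglyMeasurable
  have hsum_a : ∀ (n : ℕ) (ω : Ω), ∑ i ∈ Finset.range n, a i ω ≤ 8 * M * A ω := by
    intro n ω
    calc ∑ i ∈ Finset.range n, a i ω
        ≤ ∑ i ∈ Finset.range n, (if M ^ i < A ω then (4*M) * M ^ i else 0) := by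
          apply Finset.sum_le_sum
          intro i _
          by_cases h : M ^ i < A ω
          · rw [if_pos h]
            calc a i ω ≤ 4 * M ^ (i+1) := hab i ω
            _ = 4 * M * M ^ i := by ring
          · rw [if_neg h, hasupp i ω (not_lt.mp h)]
    _ = ∑ i ∈ (Finset.range n).filter (fun i => M ^ i < A ω), (4*M) * M ^ i :=
        (Finset.sum_filter _ _).symm
    _ = (4*M) * ∑ i ∈ (Finset.range n).filter (fun i => M ^ i < A ω), M ^ i := by
        rw [Finset.mul_sum]
    _ ≤ (4*M) * (2 * A ω) := by
        apply mul_le_mul_of_nonneg_left _ (by positivity)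
        apply my_geom_le hM (hA0 ω)
        intro i hi
        rw [Finset.mem_filter] at hi
        exact le_of_lt hi.2
    _ = 8 * M * A ω := by ring
  have h_bound : ∀ n : ℕ, ∀ᵐ ω ∂μ,
      ‖‖∑ i ∈ Finset.range n, d i ω * (1 - w i ω)‖^2‖ ≤ 64 * M^2 * (A ω)^2 := by
    intro n
    apply ae_of_all
    intro ω
    rw [Real.norm_eq_abs, abs_of_nonneg (sq_nonneg _)]
    calc ‖∑ i ∈ Finset.range n, d i ω * (1 - w i ω)‖^2
        ≤ (∑ i ∈ Finset.range n, a i ω)^2 :=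
          pow_le_pow_left₀ (norm_nonneg _) (norm_sum_le _ _) 2
    _ ≤ (8 * M * A ω)^2 :=
          pow_le_pow_left₀ (Finset.sum_nonneg (fun i _ => ha0 i ω)) (hsum_a n ω) 2
    _ = 64 * M^2 * (A ω)^2 := by ring
  have h_lim : ∀ᵐ ω ∂μ, Filter.Tendsto
      (fun n => ‖∑ i ∈ Finset.range n, d i ω * (1 - w i ω)‖^2) Filter.atTop
      (nhds (‖∑' i : ℕ, d i ω * (1 - w i ω)‖^2)) := by
    apply ae_of_all
    intro ω
    obtain ⟨n0, hn0⟩ := pow_unbounded_of_one_lt (A ω) (lt_of_lt_of_le one_lt_two hM)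
    have hzero : ∀ i ∉ Finset.range n0, d i ω * (1 - w i ω) = 0 := by
      intro i hi
      rw [Finset.mem_range, not_lt] at hi
      rw [hdsupp i ω (le_trans (le_of_lt hn0) (pow_le_pow_right₀ hM1 hi)), zero_mul]
    have hsummable : Summable (fun i => d i ω * (1 - w i ω)) :=
      summable_of_ne_finset_zero hzero
    exact (hsummable.hasSum.tendsto_sum_nat.norm.pow 2)
  have htend := tendsto_integral_of_dominated_convergence _ hFmeas hbound_int h_bound h_lim
  exact le_of_tendsto htend (Filter.Eventually.of_forall key)
end

section
/- Let F and G be complex random variables on a probability space with |G| ≤ |F| almost surely and F ≠ 0 a.s., and suppose S = G/F satisfies 𝔼(S) ∈ ℝ and 𝔼(S) = exp(𝔼 log|S|). Let λ > 0 and A = {|F| > λ}, and suppose |S| = 1 on Ω∖A and |S| = λ/|F| on A. If 𝔼|F|² = 1, then 𝔼|1 − S|² ≤ 2(1 − 𝔼S) ≤ 2𝔼(1_A log(|F|/λ)) ≤ (2/λ) 𝔼(1_A |F|), and 𝔼|F − G| ≤ 1/λ. -/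
open MeasureTheory

/-- Abstract form of Theorem 3.3: `F, G` complex random variables with `|G| ≤ |F|` a.s.,
`F ≠ 0` a.s., `S = G/F` with `𝔼S` real, `𝔼S = exp(𝔼 log|S|)`, `A = {|F| > λ}`, `|S| = 1` off
`A`, `|S| = λ/|F|` on `A`, `𝔼|F|² = 1`. Then
`𝔼|1-S|² ≤ 2(1-𝔼S) ≤ 2𝔼(1_A log(|F|/λ)) ≤ (2/λ)𝔼(1_A |F|)` and `𝔼|F-G| ≤ 1/λ`. -/
theorem stmt_16 {Ω : Type*} [MeasurableSpace Ω] (μ : Measure Ω) [IsProbabilityMeasure μ]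
    (F G : Ω → ℂ) (hFm : AEStronglyMeasurable F μ) (hGm : AEStronglyMeasurable G μ)
    (hFG : ∀ᵐ ω ∂μ, ‖G ω‖ ≤ ‖F ω‖) (hFne : ∀ᵐ ω ∂μ, F ω ≠ 0)
    (S : Ω → ℂ) (hS : S = fun ω => G ω / F ω)
    (hF2 : Integrable (fun ω => ‖F ω‖^2) μ)
    (hlogint : Integrable (fun ω => Real.log ‖S ω‖) μ)
    (hSreal : (∫ ω, S ω ∂μ).im = 0)
    (hSexp : (∫ ω, S ω ∂μ).re = Real.exp (∫ ω, Real.log ‖S ω‖ ∂μ))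
    (lam : ℝ) (hlam : 0 < lam)
    (hS1 : ∀ᵐ ω ∂μ, ‖F ω‖ ≤ lam → ‖S ω‖ = 1)
    (hS2 : ∀ᵐ ω ∂μ, lam < ‖F ω‖ → ‖S ω‖ = lam / ‖F ω‖)
    (hnorm : ∫ ω, ‖F ω‖^2 ∂μ = 1) :
    ∫ ω, ‖1 - S ω‖^2 ∂μ ≤ 2 * (1 - (∫ ω, S ω ∂μ).re) ∧
    2 * (1 - (∫ ω, S ω ∂μ).re)
      ≤ 2 * ∫ ω in {ω | lam < ‖F ω‖}, Real.log (‖F ω‖ / lam) ∂μ ∧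
    2 * ∫ ω in {ω | lam < ‖F ω‖}, Real.log (‖F ω‖ / lam) ∂μ
      ≤ (2/lam) * ∫ ω in {ω | lam < ‖F ω‖}, ‖F ω‖ ∂μ ∧
    ∫ ω, ‖F ω - G ω‖ ∂μ ≤ 1/lam := by
  -- measurable representative of `‖F ·‖`
  have hN : AEMeasurable (fun ω => ‖F ω‖) μ := hFm.norm.aemeasurable
  set f : Ω → ℝ := hN.mk _ with hf_def
  have hfm : Measurable f := hN.measurable_mk
  have hfe : (fun ω => ‖F ω‖) =ᵐ[μ] f := hN.ae_eq_mk
  set A' : Set Ω := {ω | lam < f ω} with hA'_def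
  have hA' : MeasurableSet A' := measurableSet_lt measurable_const hfm
  have hAeq : {ω | lam < ‖F ω‖} =ᵐ[μ] A' := by
    apply Filter.eventuallyEq_set.2
    filter_upwards [hfe] with ω h
    simp [A', Set.mem_setOf_eq, h]
  have hres : μ.restrict {ω | lam < ‖F ω‖} = μ.restrict A' :=
    Measure.restrict_congr_set hAeq
  -- basic facts about S
  have hSm : AEStronglyMeasurable S μ := by
    rw [hS]; exact (hGm.aemeasurable.div hFm.aemeasurable).aestronglyMeasurable
  have hSle : ∀ᵐ ω ∂μ, ‖S ω‖ ≤ 1 := by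
    filter_upwards [hFG, hFne] with ω h1 h2
    rw [hS]
    simp only [norm_div]
    rw [div_le_one (norm_pos_iff.2 h2)]
    exact h1
  have hSint : Integrable S μ := by
    refine (integrable_const (1:ℝ)).mono' hSm ?_
    filter_upwards [hSle] with ω h
    exact h
  have hg2int : Integrable (fun ω => ‖1 - S ω‖^2) μ := by
    refine (integrable_const (4:ℝ)).mono' ?_ ?_
    · exact ((aestronglyMeasurable_const.sub hSm).norm.pow 2)
    · filter_upwards [hSle] with ω h
      have h1 : ‖1 - S ω‖ ≤ 2 := by
        calc ‖1 - S ω‖ ≤ ‖(1:ℂ)‖ + ‖S ω‖ := norm_sub_le _ _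
        _ ≤ 1 + 1 := add_le_add norm_one.le h
        _ = 2 := by norm_num
      rw [Real.norm_eq_abs, abs_of_nonneg (sq_nonneg _)]
      nlinarith [norm_nonneg (1 - S ω)]
  have hFnorm_int : Integrable (fun ω => ‖F ω‖) μ := by
    refine ((hF2.add (integrable_const 1)).mono' hFm.norm ?_)
    filter_upwards with ω
    simp only [Pi.add_apply]
    rw [Real.norm_eq_abs, abs_of_nonneg (norm_nonneg _)]
    nlinarith [sq_nonneg (‖F ω‖ - 1), norm_nonneg (F ω)]
  -- Part 1
  have hre_int : Integrable (fun ω => (S ω).re) μ := by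
    have := hSint.re
    simpa using this
  have hre : ∫ ω, (S ω).re ∂μ = (∫ ω, S ω ∂μ).re := by
    have := integral_re (𝕜 := ℂ) hSint
    simpa using this
  have part1 : ∫ ω, ‖1 - S ω‖^2 ∂μ ≤ 2 * (1 - (∫ ω, S ω ∂μ).re) := by
    have hmono : ∫ ω, ‖1 - S ω‖^2 ∂μ ≤ ∫ ω, (2 - 2 * (S ω).re) ∂μ := by
      refine integral_mono_ae hg2int ((integrable_const 2).sub (hre_int.const_mul 2)) ?_
      filter_upwards [hSle] with ω h
      have h2 : ‖S ω‖^2 ≤ 1 := by nlinarith [norm_nonneg (S ω)]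
      have hns : ‖1 - S ω‖^2 = (1 - (S ω).re)^2 + (S ω).im^2 := by
        rw [Complex.sq_norm, Complex.normSq_apply]
        simp
        ring
      have hns2 : ‖S ω‖^2 = (S ω).re^2 + (S ω).im^2 := by
        rw [Complex.sq_norm, Complex.normSq_apply]
        ring
      nlinarith
    have hcalc : ∫ ω, (2 - 2 * (S ω).re) ∂μ = 2 - 2 * (∫ ω, S ω ∂μ).re := by
      rw [integral_sub (integrable_const 2) (hre_int.const_mul 2), integral_const_mul,
        hre]
      simp
    linarith [hmono, hcalc.le, hcalc.ge]
  -- the key identity: log ‖S‖ = - indicator of A' of log(‖F‖/lam)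
  have hlogeq : (fun ω => Real.log ‖S ω‖)
      =ᵐ[μ] fun ω => - A'.indicator (fun ω => Real.log (‖F ω‖ / lam)) ω := by
    filter_upwards [hS1, hS2, hfe] with ω h1 h2 hf
    by_cases hmem : ω ∈ A'
    · have hlt : lam < ‖F ω‖ := by rw [hf]; exact hmem
      have hF0 : ‖F ω‖ ≠ 0 := ne_of_gt (hlam.trans hlt)
      rw [Set.indicator_of_mem hmem, h2 hlt]
      rw [Real.log_div (ne_of_gt hlam) hF0, Real.log_div hF0 (ne_of_gt hlam)]
      ring
    · have hle : ‖F ω‖ ≤ lam := by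
        rw [hf]
        exact le_of_not_gt hmem
      rw [Set.indicator_of_notMem hmem, h1 hle]
      simp
  have hind : Integrable (A'.indicator (fun ω => Real.log (‖F ω‖ / lam))) μ := by
    refine hlogint.neg.congr ?_
    filter_upwards [hlogeq] with ω h
    simp only [Pi.neg_apply]
    rw [h, neg_neg]
  have hlogS_eq : ∫ ω, Real.log ‖S ω‖ ∂μ
      = - ∫ ω in A', Real.log (‖F ω‖ / lam) ∂μ := by
    rw [integral_congr_ae hlogeq, integral_neg, integral_indicator hA']
  set J : ℝ := ∫ ω in A', Real.log (‖F ω‖ / lam) ∂μ with hJ_def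
  have hJ_int : IntegrableOn (fun ω => Real.log (‖F ω‖ / lam)) A' μ :=
    (integrable_indicator_iff hA').1 hind
  -- Part 2
  have part2 : 2 * (1 - (∫ ω, S ω ∂μ).re) ≤ 2 * J := by
    rw [hSexp, hlogS_eq]
    have := Real.add_one_le_exp (-J)
    nlinarith
  -- Part 3
  have hJle : J ≤ (∫ ω in A', ‖F ω‖ ∂μ) / lam := by
    have hmono : J ≤ ∫ ω in A', ‖F ω‖ / lam ∂μ := by
      refine integral_mono_ae hJ_int ((hFnorm_int.div_const lam).restrict) ?_
      filter_upwards [ae_restrict_mem hA', ae_restrict_of_ae hfe] with ω hmem hf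
      have hlt : lam < ‖F ω‖ := by rw [hf]; exact hmem
      have hx : 0 < ‖F ω‖ / lam := div_pos (hlam.trans hlt) hlam
      have := Real.log_le_sub_one_of_pos hx
      linarith
    rwa [integral_div] at hmono
  have part3 : 2 * J ≤ (2 / lam) * ∫ ω in A', ‖F ω‖ ∂μ := by
    rw [div_mul_eq_mul_div, mul_comm (2:ℝ), mul_div_assoc]
    linarith
  -- bound ∫ ‖1 - S‖² ≤ 1/lam²
  have hJle2 : 2 * J ≤ 1 / lam^2 := by
    have hmono : ∫ ω in A', 2 * Real.log (‖F ω‖ / lam) ∂μ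
        ≤ ∫ ω in A', ‖F ω‖^2 / lam^2 ∂μ := by
      refine integral_mono_ae (hJ_int.const_mul 2) ((hF2.div_const (lam^2)).restrict) ?_
      filter_upwards [ae_restrict_mem hA', ae_restrict_of_ae hfe] with ω hmem hf
      have hlt : lam < ‖F ω‖ := by rw [hf]; exact hmem
      have hx : (1:ℝ) < ‖F ω‖ / lam := (one_lt_div hlam).2 hlt
      have hlog2 : Real.log (‖F ω‖ / lam) ≤ ‖F ω‖ / lam - 1 :=
        Real.log_le_sub_one_of_pos (lt_trans one_pos hx)
      have hsq : (‖F ω‖ / lam)^2 = ‖F ω‖^2 / lam^2 := by ring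
      nlinarith
    rw [integral_const_mul] at hmono
    have h2 : ∫ ω in A', ‖F ω‖^2 / lam^2 ∂μ = (∫ ω in A', ‖F ω‖^2 ∂μ) / lam^2 := by
      rw [integral_div]
    have h3 : ∫ ω in A', ‖F ω‖^2 ∂μ ≤ ∫ ω, ‖F ω‖^2 ∂μ := by
      refine setIntegral_le_integral hF2 ?_
      filter_upwards with ω using sq_nonneg _
    rw [h2] at hmono
    have : (∫ ω in A', ‖F ω‖^2 ∂μ) / lam^2 ≤ 1 / lam^2 := by
      rw [hnorm] at h3
      exact div_le_div_of_nonneg_right h3 (by positivity) |>.trans_eq rfl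
    linarith
  have hg2le : ∫ ω, ‖1 - S ω‖^2 ∂μ ≤ 1 / lam^2 := le_trans part1 (le_trans part2 hJle2)
  -- Part 4
  have hfact : (fun ω => ‖F ω - G ω‖) =ᵐ[μ] fun ω => ‖F ω‖ * ‖1 - S ω‖ := by
    filter_upwards [hFne] with ω h
    rw [← norm_mul]
    congr 1
    simp only [hS]
    field_simp
  have hprod_int : Integrable (fun ω => ‖F ω‖ * ‖1 - S ω‖) μ := by
    refine (((hF2.div_const lam).add (hg2int.const_mul lam)).div_const 2).mono' ?_ ?_
    · exact hFm.norm.mul (aestronglyMeasurable_const.sub hSm).norm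
    · filter_upwards with ω
      simp only [Pi.add_apply]
      rw [Real.norm_eq_abs, abs_of_nonneg (by positivity)]
      rw [← sub_nonneg]
      have hkey : (‖F ω‖^2 / lam + lam * ‖1 - S ω‖^2) / 2 - ‖F ω‖ * ‖1 - S ω‖
          = (‖F ω‖ - lam * ‖1 - S ω‖)^2 / (2 * lam) := by
        field_simp
        ring
      rw [hkey]
      positivity
  have part4 : ∫ ω, ‖F ω - G ω‖ ∂μ ≤ 1 / lam := by
    rw [integral_congr_ae hfact]
    have hmono : ∫ ω, ‖F ω‖ * ‖1 - S ω‖ ∂μ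
        ≤ ∫ ω, (‖F ω‖^2 / lam + lam * ‖1 - S ω‖^2) / 2 ∂μ := by
      refine integral_mono_ae hprod_int
        (((hF2.div_const lam).add (hg2int.const_mul lam)).div_const 2) ?_
      filter_upwards with ω
      rw [← sub_nonneg]
      have hkey : (‖F ω‖^2 / lam + lam * ‖1 - S ω‖^2) / 2 - ‖F ω‖ * ‖1 - S ω‖
          = (‖F ω‖ - lam * ‖1 - S ω‖)^2 / (2 * lam) := by
        field_simp
        ring
      rw [hkey]
      positivity
    have hcalc : ∫ ω, (‖F ω‖^2 / lam + lam * ‖1 - S ω‖^2) / 2 ∂μ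
        = ((∫ ω, ‖F ω‖^2 ∂μ) / lam + lam * ∫ ω, ‖1 - S ω‖^2 ∂μ) / 2 := by
      rw [integral_div, integral_add (hF2.div_const lam) (hg2int.const_mul lam),
        integral_div, integral_const_mul]
    rw [hcalc, hnorm] at hmono
    have hlb : lam * ∫ ω, ‖1 - S ω‖^2 ∂μ ≤ lam * (1 / lam^2) :=
      mul_le_mul_of_nonneg_left hg2le hlam.le
    have : lam * (1 / lam^2) = 1 / lam := by field_simp
    calc ∫ ω, ‖F ω‖ * ‖1 - S ω‖ ∂μ ≤ (1 / lam + lam * ∫ ω, ‖1 - S ω‖^2 ∂μ) / 2 := hmono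
      _ ≤ (1 / lam + 1 / lam) / 2 := by linarith [hlb, this.le, this.ge]
      _ = 1 / lam := by ring
  have e1 : (∫ ω in {ω | lam < ‖F ω‖}, Real.log (‖F ω‖ / lam) ∂μ) = J := by
    rw [hJ_def, hres]
  have e2 : (∫ ω in {ω | lam < ‖F ω‖}, ‖F ω‖ ∂μ) = ∫ ω in A', ‖F ω‖ ∂μ := by
    rw [hres]
  refine ⟨part1, ?_, ?_, part4⟩
  · rw [e1]; exact part2
  · rw [e1, e2]; exact part3
end
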